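/- Let T : Sym₀(3) → Sym₀(3) be a linear map that is frame indifferent, i.e. T(RAR^T) = R T(A) R^T for all rotations R ∈ SO(3) and all A ∈ Sym₀(3). Then T is a scalar multiple of the identity. -/

import Mathlib

open Matrix

private lemma mem_SO3' (R : Matrix (Fin 3) (Fin 3) ℝ) (h1 : R * Rᵀ = 1) (h2 : R.det = 1) :
    R ∈ Matrix.specialOrthogonalGroup (Fin 3) ℝ := by
  rw [Matrix.mem_specialOrthogonalGroup_iff]
  refine ⟨?_, h2⟩
  rw [Matrix.mem_orthogonalGroup_iff]
  simpa [star_eq_conjTranspose, conjTranspose] using h1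

private lemma tr3' (a b c d e f g h i : ℝ) :
    (!![a,b,c;d,e,f;g,h,i])ᵀ = !![a,d,g;b,e,h;c,f,i] := by
  ext i j; fin_cases i <;> fin_cases j <;> rfl

set_option maxHeartbeats 1600000 in
/-- A linear map `T` on the space of symmetric traceless `3×3` matrices which
is frame indifferent (`T(R A Rᵀ) = R (T A) Rᵀ` for all `R ∈ SO(3)`) is a scalar multiple of
the identity. -/
theorem frame_indifferent_linear_map_is_scalar
    (T : Matrix (Fin 3) (Fin 3) ℝ →ₗ[ℝ] Matrix (Fin 3) (Fin 3) ℝ)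
    (hmaps : ∀ A : Matrix (Fin 3) (Fin 3) ℝ, A.IsSymm → A.trace = 0 →
      (T A).IsSymm ∧ (T A).trace = 0)
    (hframe : ∀ A : Matrix (Fin 3) (Fin 3) ℝ, A.IsSymm → A.trace = 0 →
      ∀ R ∈ Matrix.specialOrthogonalGroup (Fin 3) ℝ,
        T (R * A * Rᵀ) = R * T A * Rᵀ) :
    ∃ c : ℝ, ∀ A : Matrix (Fin 3) (Fin 3) ℝ, A.IsSymm → A.trace = 0 →
      T A = c • A := by
  set M1 : Matrix (Fin 3) (Fin 3) ℝ := !![1,0,0;0,-1,0;0,0,0] with hM1def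
  set M2 : Matrix (Fin 3) (Fin 3) ℝ := !![0,0,0;0,1,0;0,0,-1] with hM2def
  set S01 : Matrix (Fin 3) (Fin 3) ℝ := !![0,1,0;1,0,0;0,0,0] with hS01def
  set S02 : Matrix (Fin 3) (Fin 3) ℝ := !![0,0,1;0,0,0;1,0,0] with hS02def
  set S12 : Matrix (Fin 3) (Fin 3) ℝ := !![0,0,0;0,0,1;0,1,0] with hS12def
  have hM1s : M1.IsSymm := by
    ext i j; fin_cases i <;> fin_cases j <;> rfl
  have hM1t : M1.trace = 0 := by
    rw [hM1def, Matrix.trace_fin_three_of]; norm_num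
  have hS01s : S01.IsSymm := by ext i j; fin_cases i <;> fin_cases j <;> rfl
  have hS01t : S01.trace = 0 := by rw [hS01def, Matrix.trace_fin_three_of]; norm_num
  have hS12s : S12.IsSymm := by ext i j; fin_cases i <;> fin_cases j <;> rfl
  have hS12t : S12.trace = 0 := by rw [hS12def, Matrix.trace_fin_three_of]; norm_num
  -- rotations
  set R1 : Matrix (Fin 3) (Fin 3) ℝ := !![1,0,0;0,-1,0;0,0,-1] with hR1def
  set R2 : Matrix (Fin 3) (Fin 3) ℝ := !![-1,0,0;0,1,0;0,0,-1] with hR2def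
  set R12 : Matrix (Fin 3) (Fin 3) ℝ := !![0,1,0;1,0,0;0,0,-1] with hR12def
  set P : Matrix (Fin 3) (Fin 3) ℝ := !![0,0,1;1,0,0;0,1,0] with hPdef
  have hR1m : R1 ∈ Matrix.specialOrthogonalGroup (Fin 3) ℝ := by
    apply mem_SO3'
    · rw [hR1def, tr3']; norm_num [Matrix.mul_fin_three]; exact Matrix.one_fin_three.symm
    · rw [hR1def]; norm_num [Matrix.det_fin_three, Matrix.cons_val_two, Matrix.tail_cons]
  have hR2m : R2 ∈ Matrix.specialOrthogonalGroup (Fin 3) ℝ := by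
    apply mem_SO3'
    · rw [hR2def, tr3']; norm_num [Matrix.mul_fin_three]; exact Matrix.one_fin_three.symm
    · rw [hR2def]; norm_num [Matrix.det_fin_three, Matrix.cons_val_two, Matrix.tail_cons]
  have hR12m : R12 ∈ Matrix.specialOrthogonalGroup (Fin 3) ℝ := by
    apply mem_SO3'
    · rw [hR12def, tr3']; norm_num [Matrix.mul_fin_three]; exact Matrix.one_fin_three.symm
    · rw [hR12def]; norm_num [Matrix.det_fin_three, Matrix.cons_val_two, Matrix.tail_cons]
  have hPm : P ∈ Matrix.specialOrthogonalGroup (Fin 3) ℝ := by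
    apply mem_SO3'
    · rw [hPdef, tr3']; norm_num [Matrix.mul_fin_three]; exact Matrix.one_fin_three.symm
    · rw [hPdef]; norm_num [Matrix.det_fin_three, Matrix.cons_val_two, Matrix.tail_cons]
  obtain ⟨s, hs⟩ : ∃ s : ℝ, s * s = 1 / 2 :=
    ⟨Real.sqrt 2 / 2, by
      rw [div_mul_div_comm, Real.mul_self_sqrt (by norm_num)]; norm_num⟩
  set R45 : Matrix (Fin 3) (Fin 3) ℝ := !![s,-s,0;s,s,0;0,0,1] with hR45def
  have hR45m : R45 ∈ Matrix.specialOrthogonalGroup (Fin 3) ℝ := by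
    apply mem_SO3'
    · rw [hR45def, tr3']
      ext i j
      fin_cases i <;> fin_cases j <;>
        (try simp [Matrix.mul_apply, Fin.sum_univ_three, Matrix.one_apply,
          Matrix.vecHead, Matrix.vecTail]) <;>
        nlinarith [hs]
    · rw [hR45def]
      simp [Matrix.det_fin_three]
      nlinarith [hs]
  -- B := T M1
  set B := T M1 with hBdef
  obtain ⟨hBs, hBt⟩ := hmaps M1 hM1s hM1t
  set c : ℝ := B 0 0 with hcdef
  -- conjugation identities for inputs
  have e1 : R1 * M1 * R1ᵀ = M1 := by
    rw [hR1def, hM1def, tr3']; ext i j; fin_cases i <;> fin_cases j <;> norm_num [Matrix.mul_apply, Fin.sum_univ_three, Matrix.vecHead, Matrix.vecTail, Matrix.cons_val_two, Matrix.tail_cons]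
  have e2 : R2 * M1 * R2ᵀ = M1 := by
    rw [hR2def, hM1def, tr3']; ext i j; fin_cases i <;> fin_cases j <;> norm_num [Matrix.mul_apply, Fin.sum_univ_three, Matrix.vecHead, Matrix.vecTail, Matrix.cons_val_two, Matrix.tail_cons]
  have e12 : R12 * M1 * R12ᵀ = -M1 := by
    rw [hR12def, hM1def, tr3']; ext i j
    fin_cases i <;> fin_cases j <;> norm_num [Matrix.mul_apply, Fin.sum_univ_three, Matrix.neg_apply, Matrix.cons_val_two, Matrix.tail_cons]
  -- consequences
  have h1 : B = R1 * B * R1ᵀ := by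
    have := hframe M1 hM1s hM1t R1 hR1m; rw [e1] at this; exact this
  have h2 : B = R2 * B * R2ᵀ := by
    have := hframe M1 hM1s hM1t R2 hR2m; rw [e2] at this; exact this
  have h12 : -B = R12 * B * R12ᵀ := by
    have := hframe M1 hM1s hM1t R12 hR12m; rw [e12, map_neg] at this; exact this
  have hB01 : B 0 1 = 0 := by
    have := congrFun (congrFun h1 0) 1
    rw [hR1def, tr3'] at this
    simp [Matrix.mul_apply, Matrix.vecMul, dotProduct, Fin.sum_univ_three] at this
    linarith
  have hB02 : B 0 2 = 0 := by
    have := congrFun (congrFun h1 0) 2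
    rw [hR1def, tr3'] at this
    simp [Matrix.mul_apply, Matrix.vecMul, dotProduct, Fin.sum_univ_three] at this
    linarith
  have hB12 : B 1 2 = 0 := by
    have := congrFun (congrFun h2 1) 2
    rw [hR2def, tr3'] at this
    simp [Matrix.mul_apply, Matrix.vecMul, dotProduct, Fin.sum_univ_three] at this
    linarith
  have hB11 : B 1 1 = -c := by
    have := congrFun (congrFun h12 0) 0
    rw [hR12def, tr3'] at this
    simp [Matrix.mul_apply, Matrix.vecMul, dotProduct, Fin.sum_univ_three] at this
    rw [hcdef]; linarith
  have hB22 : B 2 2 = 0 := by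
    have := congrFun (congrFun h12 2) 2
    rw [hR12def, tr3'] at this
    simp [Matrix.mul_apply, Matrix.vecMul, dotProduct, Fin.sum_univ_three] at this
    linarith
  have h10 : B 1 0 = 0 := (hBs.apply 0 1).trans hB01
  have h20 : B 2 0 = 0 := (hBs.apply 0 2).trans hB02
  have h21 : B 2 1 = 0 := (hBs.apply 1 2).trans hB12
  have hTM1 : T M1 = c • M1 := by
    rw [← hBdef, hM1def]
    ext i j
    fin_cases i <;> fin_cases j <;>
      simp [Matrix.smul_apply, Matrix.vecHead, Matrix.vecTail,
        hB01, hB02, hB12, hB11, hB22, h10, h20, h21, hcdef]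
  -- T M2 = c • M2
  have eP1 : P * M1 * Pᵀ = M2 := by
    rw [hPdef, hM1def, hM2def, tr3']; ext i j; fin_cases i <;> fin_cases j <;> norm_num [Matrix.mul_apply, Fin.sum_univ_three, Matrix.vecHead, Matrix.vecTail, Matrix.cons_val_two, Matrix.tail_cons]
  have hTM2 : T M2 = c • M2 := by
    have := hframe M1 hM1s hM1t P hPm
    rw [eP1, hTM1, mul_smul_comm, smul_mul_assoc, eP1] at this
    exact this
  -- T S01 = c • S01
  have e45 : R45 * M1 * R45ᵀ = S01 := by
    rw [hR45def, hM1def, hS01def, tr3']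
    ext i j
    fin_cases i <;> fin_cases j <;>
      (try simp [Matrix.mul_apply, Fin.sum_univ_three, Matrix.vecHead, Matrix.vecTail]) <;>
      nlinarith [hs]
  have hTS01 : T S01 = c • S01 := by
    have := hframe M1 hM1s hM1t R45 hR45m
    rw [e45, hTM1, mul_smul_comm, smul_mul_assoc, e45] at this
    exact this
  -- T S12 = c • S12, T S02 = c • S02
  have ePS01 : P * S01 * Pᵀ = S12 := by
    rw [hPdef, hS01def, hS12def, tr3']; ext i j; fin_cases i <;> fin_cases j <;> norm_num [Matrix.mul_apply, Fin.sum_univ_three, Matrix.vecHead, Matrix.vecTail, Matrix.cons_val_two, Matrix.tail_cons]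
  have hTS12 : T S12 = c • S12 := by
    have := hframe S01 hS01s hS01t P hPm
    rw [ePS01, hTS01, mul_smul_comm, smul_mul_assoc, ePS01] at this
    exact this
  have ePS12 : P * S12 * Pᵀ = S02 := by
    rw [hPdef, hS12def, hS02def, tr3']; ext i j; fin_cases i <;> fin_cases j <;> norm_num [Matrix.mul_apply, Fin.sum_univ_three, Matrix.vecHead, Matrix.vecTail, Matrix.cons_val_two, Matrix.tail_cons]
  have hTS02 : T S02 = c • S02 := by
    have := hframe S12 hS12s hS12t P hPm
    rw [ePS12, hTS12, mul_smul_comm, smul_mul_assoc, ePS12] at this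
    exact this
  refine ⟨c, fun A hAs hAt => ?_⟩
  have htr := Matrix.trace_fin_three A
  rw [hAt] at htr
  have hdecomp : A = A 0 0 • M1 + (A 0 0 + A 1 1) • M2
      + A 0 1 • S01 + A 0 2 • S02 + A 1 2 • S12 := by
    ext i j
    fin_cases i <;> fin_cases j <;>
      simp [hM1def, hM2def, hS01def, hS02def, hS12def, Matrix.add_apply, Matrix.smul_apply,
        Matrix.vecHead, Matrix.vecTail] <;>
      first
        | linarith
        | (rw [hAs.apply]; try linarith)
  rw [hdecomp]
  simp only [map_add, _root_.map_smul, hTM1, hTM2, hTS01, hTS02, hTS12,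
    smul_add, smul_smul]
  module
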